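/- Let λ, c > 0. Define f : ℝ³ × (0,∞) → ℝ on the open cone {(x,t) : ‖x‖ < ct, t > 0} by f(x,t) = I₁((λ/c)√(c²t² − ‖x‖²)) / √(c²t² − ‖x‖²). Then f satisfies the fourth-order Klein–Gordon-type equation (∂²/∂t² − c²Δ)² f = λ⁴ f on the open cone, where Δ = Σ_{j=1}^3 ∂²/∂x_j² and (∂²/∂t² − c²Δ)² denotes the twofold iterate of the operator ∂²/∂t² − c²Δ. (The function f equals, up to the factor (2c/λ)² π sinh(λt), the absolutely continuous density of the random flight X₃(t).) -/

import Mathlib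

open Real

noncomputable def besselI1 (x : ℝ) : ℝ :=
  ∑' k : ℕ, (x / 2) ^ (2 * k + 1) / ((k.factorial : ℝ) * ((k + 1).factorial : ℝ))

noncomputable def dAlembert3 (c : ℝ)
    (u : EuclideanSpace ℝ (Fin 3) × ℝ → ℝ) :
    EuclideanSpace ℝ (Fin 3) × ℝ → ℝ :=
  fun p =>
    iteratedDeriv 2 (fun s => u (p.1, s)) p.2
      - c ^ 2 * ∑ j : Fin 3,
          iteratedDeriv 2 (fun s => u (WithLp.toLp 2 (Function.update p.1 j s), p.2)) (p.1 j)

private lemma summable_main {b : ℕ → ℝ} (C s : ℝ)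
    (hb : ∀ k, |b k| ≤ C * s ^ k / k.factorial) : Summable b := by
  apply Summable.of_norm
  apply Summable.of_nonneg_of_le (fun k => norm_nonneg _) (fun k => hb k)
  have := (Real.summable_pow_div_factorial s).mul_left C
  simpa [mul_div_assoc] using this

private lemma nat_le_two_pow (k : ℕ) : (k : ℝ) ≤ 2 ^ k := by
  induction k with
  | zero => norm_num
  | succ n ih =>
    push_cast
    have : (1:ℝ) ≤ 2 ^ n := one_le_pow₀ (by norm_num)
    calc (n:ℝ) + 1 ≤ 2 ^ n + 2 ^ n := by linarith
    _ = 2 ^ (n+1) := by ring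

/-- key: entire power series, derivative with shifted coefficients. -/
private lemma hasDerivAt_tsum_poly {b : ℕ → ℝ} (C s : ℝ) (hs : 0 ≤ s)
    (hb : ∀ k, |b k| ≤ C * s ^ k / k.factorial) (x : ℝ) :
    HasDerivAt (fun y => ∑' k : ℕ, b k * y ^ k)
      (∑' k : ℕ, ((k:ℝ) + 1) * b (k + 1) * x ^ k) x := by
  have hC : 0 ≤ C := le_trans (abs_nonneg _) (by simpa using hb 0)
  have habs : 0 ≤ |x| := abs_nonneg x
  set R : ℝ := |x| + 1 with hR
  have hR1 : (1:ℝ) ≤ R := by rw [hR]; linarith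
  have hR0 : 0 < R := by linarith
  have hbnd : ∀ (y:ℝ), |y| ≤ R → ∀ k,
      |b k * ((k:ℝ) * y ^ (k-1))| ≤ C * (2*s*R) ^ k / k.factorial := by
    intro y hyR k
    rcases Nat.eq_zero_or_pos k with rfl | hk
    · simp; positivity
    · have h1 : |b k * ((k:ℝ) * y ^ (k-1))| = |b k| * (k:ℝ) * |y| ^ (k-1) := by
        rw [abs_mul, abs_mul, abs_pow, Nat.abs_cast, mul_assoc]
      rw [h1]
      have h2 : |y| ^ (k-1) ≤ R ^ k :=
        le_trans (pow_le_pow_left₀ (abs_nonneg _) hyR _)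
          (pow_le_pow_right₀ hR1 (Nat.sub_le k 1))
      calc |b k| * (k:ℝ) * |y| ^ (k-1)
          ≤ (C * s ^ k / k.factorial) * (2:ℝ) ^ k * R ^ k := by
            apply mul_le_mul _ h2 (by positivity) (by positivity)
            exact mul_le_mul (hb k) (nat_le_two_pow k) (Nat.cast_nonneg k)
              (by positivity)
      _ = C * (2 * s * R) ^ k / k.factorial := by
            rw [mul_pow, mul_pow]; ring
  have key : HasDerivAt (fun y => ∑' k : ℕ, b k * y ^ k)
      (∑' k : ℕ, b k * ((k:ℝ) * x ^ (k - 1))) x := by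
    apply hasDerivAt_tsum_of_isPreconnected
      (u := fun k => C * (2 * s * R) ^ k / k.factorial)
      (t := Metric.ball (0:ℝ) R) (y₀ := 0)
      (g' := fun k y => b k * ((k:ℝ) * y ^ (k - 1)))
    · exact (Real.summable_pow_div_factorial _).mul_left C |>.congr
        (fun k => by rw [mul_div_assoc])
    · exact Metric.isOpen_ball
    · exact (convex_ball (0:ℝ) R).isPreconnected
    · exact fun k y _ => (hasDerivAt_pow k y).const_mul (b k)
    · intro k y hy
      have hyR : |y| ≤ R := by
        have := mem_ball_iff_norm.mp hy
        simp only [sub_zero, Real.norm_eq_abs] at this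
        linarith
      exact (by rw [Real.norm_eq_abs]; exact hbnd y hyR k)
    · exact Metric.mem_ball_self hR0
    · apply summable_of_ne_finset_zero (s := {0})
      intro k hk
      simp only [Finset.mem_singleton] at hk
      rw [zero_pow hk, mul_zero]
    · simp only [Metric.mem_ball, dist_zero_right, Real.norm_eq_abs]
      linarith
  have hsum : Summable (fun k : ℕ => b k * ((k:ℝ) * x ^ (k - 1))) :=
    summable_main (C * 1) (2*s*R) (by
      intro k
      have := hbnd x (by linarith) k
      simpa using this)
  have hshift := Summable.tsum_eq_zero_add hsum
  simp only [Nat.cast_zero, zero_mul, mul_zero, zero_add] at hshift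
  rw [hshift] at key
  have heq : (∑' k : ℕ, ((k:ℝ)+1) * b (k+1) * x ^ k)
      = ∑' k : ℕ, b (k+1) * (((k+1:ℕ):ℝ) * x ^ (k+1-1)) :=
    tsum_congr (fun k => by push_cast; ring)
  rw [heq]
  exact key

noncomputable def aa (L : ℝ) (k : ℕ) : ℝ :=
  L ^ (2*k+1) / ((k.factorial : ℝ) * ((k+1).factorial : ℝ))

noncomputable def hh (L : ℝ) (u : ℝ) : ℝ := ∑' k : ℕ, aa L k * u ^ k
noncomputable def hh1 (L : ℝ) (u : ℝ) : ℝ := ∑' k : ℕ, ((k:ℝ)+1) * aa L (k+1) * u ^ k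
noncomputable def hh2 (L : ℝ) (u : ℝ) : ℝ :=
  ∑' k : ℕ, ((k:ℝ)+1) * ((k:ℝ)+2) * aa L (k+2) * u ^ k

lemma abs_aa_le (L : ℝ) (m : ℕ) : |aa L m| ≤ |L| * (L^2)^m / m.factorial := by
  unfold aa
  rw [abs_div]
  have h1 : |L ^ (2*m+1)| = |L| * (L^2)^m := by
    rw [abs_pow, pow_succ, pow_mul, sq_abs, mul_comm]
  have h2 : |(m.factorial : ℝ) * ((m+1).factorial : ℝ)| = (m.factorial : ℝ) * ((m+1).factorial : ℝ) := by
    rw [abs_of_pos]; positivity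
  rw [h1, h2]
  apply div_le_div_of_nonneg_left _ (by positivity) _
  · positivity
  · calc (m.factorial : ℝ) = m.factorial * 1 := by ring
    _ ≤ (m.factorial : ℝ) * ((m+1).factorial : ℝ) := by
        apply mul_le_mul_of_nonneg_left _ (by positivity)
        exact_mod_cast Nat.one_le_iff_ne_zero.mpr (Nat.factorial_ne_zero _)

lemma aa_succ (L : ℝ) (k : ℕ) :
    ((k:ℝ)+1) * ((k:ℝ)+2) * aa L (k+1) = L^2 * aa L k := by
  unfold aa
  have e1 : ((k+1).factorial : ℝ) = ((k:ℝ)+1) * k.factorial := by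
    rw [Nat.factorial_succ]; push_cast; ring
  have e2 : ((k+2).factorial : ℝ) = ((k:ℝ)+2) * ((k+1).factorial : ℝ) := by
    rw [show k+2 = (k+1)+1 from rfl, Nat.factorial_succ]; push_cast; ring
  have e3 : L ^ (2*(k+1)+1) = L^2 * L^(2*k+1) := by ring
  rw [e3, e2, e1]
  have h1 : (k.factorial : ℝ) ≠ 0 := by positivity
  have h2 : ((k+1).factorial : ℝ) ≠ 0 := by positivity
  field_simp

lemma abs_b1_le (L : ℝ) (k : ℕ) :
    |((k:ℝ)+1) * aa L (k+1)| ≤ (|L| * L^2) * (L^2)^k / k.factorial := by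
  have h := abs_aa_le L (k+1)
  have e1 : ((k+1).factorial : ℝ) = ((k:ℝ)+1) * k.factorial := by
    rw [Nat.factorial_succ]; push_cast; ring
  calc |((k:ℝ)+1) * aa L (k+1)| = ((k:ℝ)+1) * |aa L (k+1)| := by
        rw [abs_mul, abs_of_pos (by positivity)]
  _ ≤ ((k:ℝ)+1) * (|L| * (L^2)^(k+1) / (k+1).factorial) := by
        apply mul_le_mul_of_nonneg_left h (by positivity)
  _ = (|L| * L^2) * (L^2)^k / k.factorial := by
        rw [e1]
        have h1 : (k.factorial : ℝ) ≠ 0 := by positivity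
        have h2 : ((k:ℝ)+1) ≠ 0 := by positivity
        field_simp
        ring

lemma abs_b2_le (L : ℝ) (k : ℕ) :
    |((k:ℝ)+1) * ((k:ℝ)+2) * aa L (k+2)| ≤ (|L| * L^4) * (L^2)^k / k.factorial := by
  have h := abs_aa_le L (k+2)
  have e1 : ((k+1).factorial : ℝ) = ((k:ℝ)+1) * k.factorial := by
    rw [Nat.factorial_succ]; push_cast; ring
  have e2 : ((k+2).factorial : ℝ) = ((k:ℝ)+2) * ((k+1).factorial : ℝ) := by
    rw [show k+2 = (k+1)+1 from rfl, Nat.factorial_succ]; push_cast; ring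
  calc |((k:ℝ)+1) * ((k:ℝ)+2) * aa L (k+2)|
      = (((k:ℝ)+1) * ((k:ℝ)+2)) * |aa L (k+2)| := by
        rw [abs_mul, abs_of_pos (by positivity)]
  _ ≤ (((k:ℝ)+1) * ((k:ℝ)+2)) * (|L| * (L^2)^(k+2) / (k+2).factorial) := by
        apply mul_le_mul_of_nonneg_left h (by positivity)
  _ = (|L| * L^4) * (L^2)^k / k.factorial := by
        rw [e2, e1]
        have h1 : (k.factorial : ℝ) ≠ 0 := by positivity
        have h2 : ((k:ℝ)+1) ≠ 0 := by positivity
        have h3 : ((k:ℝ)+2) ≠ 0 := by positivity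
        field_simp
        ring

lemma hasDerivAt_hh (L u : ℝ) : HasDerivAt (hh L) (hh1 L u) u := by
  unfold hh hh1
  exact hasDerivAt_tsum_poly |L| (L^2) (by positivity) (abs_aa_le L) u

lemma hasDerivAt_hh1 (L u : ℝ) : HasDerivAt (hh1 L) (hh2 L u) u := by
  unfold hh1 hh2
  have key := hasDerivAt_tsum_poly (b := fun k => ((k:ℝ)+1) * aa L (k+1))
    (|L| * L^2) (L^2) (by positivity) (abs_b1_le L) u
  convert key using 1
  apply tsum_congr
  intro k
  push_cast
  ring

lemma ode_identity (L u : ℝ) : u * hh2 L u + 2 * hh1 L u = L^2 * hh L u := by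
  have sum2 : Summable (fun k : ℕ => ((k:ℝ)+1) * ((k:ℝ)+2) * aa L (k+2) * u ^ k) := by
    apply summable_main (|L| * L^4) (L^2 * |u|)
    intro k
    rw [abs_mul, abs_pow, mul_pow]
    calc |((k:ℝ)+1) * ((k:ℝ)+2) * aa L (k+2)| * |u|^k
        ≤ ((|L| * L^4) * (L^2)^k / k.factorial) * |u|^k :=
          mul_le_mul_of_nonneg_right (abs_b2_le L k) (by positivity)
    _ = (|L| * L^4) * ((L^2)^k * |u|^k) / k.factorial := by ring
  have sum1 : Summable (fun k : ℕ => 2 * (((k:ℝ)+1) * aa L (k+1) * u ^ k)) := by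
    apply summable_main (2 * (|L| * L^2)) (L^2 * |u|)
    intro k
    rw [abs_mul, abs_mul, abs_pow, mul_pow, abs_two]
    calc 2 * (|((k:ℝ)+1) * aa L (k+1)| * |u|^k)
        ≤ 2 * (((|L| * L^2) * (L^2)^k / k.factorial) * |u|^k) := by
          apply mul_le_mul_of_nonneg_left _ (by norm_num)
          exact mul_le_mul_of_nonneg_right (abs_b1_le L k) (by positivity)
    _ = 2 * (|L| * L^2) * ((L^2)^k * |u|^k) / k.factorial := by ring
  have sumd : Summable (fun k : ℕ => (k:ℝ) * (((k:ℝ)+1) * aa L (k+1)) * u ^ k) := by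
    apply summable_main (|L| * L^2) (2 * (L^2 * |u|))
    intro k
    rw [abs_mul, abs_mul, Nat.abs_cast, abs_pow, mul_pow, mul_pow]
    calc (k:ℝ) * |((k:ℝ)+1) * aa L (k+1)| * |u|^k
        ≤ ((2:ℝ)^k * ((|L| * L^2) * (L^2)^k / k.factorial)) * |u|^k := by
          apply mul_le_mul_of_nonneg_right _ (by positivity)
          exact mul_le_mul (nat_le_two_pow k) (abs_b1_le L k) (abs_nonneg _) (by positivity)
    _ = (|L| * L^2) * ((2:ℝ)^k * ((L^2)^k * |u|^k)) / k.factorial := by ring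
  have shift : u * hh2 L u = ∑' k : ℕ, (k:ℝ) * (((k:ℝ)+1) * aa L (k+1)) * u ^ k := by
    rw [Summable.tsum_eq_zero_add sumd]
    simp only [Nat.cast_zero, zero_mul, zero_add]
    unfold hh2
    rw [← tsum_mul_left]
    apply tsum_congr
    intro k
    push_cast
    ring
  unfold hh1
  rw [shift, ← tsum_mul_left (a := (2:ℝ)), ← Summable.tsum_add sumd sum1]
  unfold hh
  rw [← tsum_mul_left]
  apply tsum_congr
  intro k
  linear_combination u ^ k * aa_succ L k

lemma norm_sq_eq (x : EuclideanSpace ℝ (Fin 3)) : ‖x‖^2 = ∑ i : Fin 3, (x i)^2 := by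
  rw [EuclideanSpace.norm_eq, Real.sq_sqrt (by positivity)]
  simp [sq_abs]

lemma norm_update_sq (x : EuclideanSpace ℝ (Fin 3)) (j : Fin 3) (s : ℝ)
    (y : EuclideanSpace ℝ (Fin 3)) (hy : y = WithLp.toLp 2 (Function.update x j s)) :
    ‖y‖^2 = ‖x‖^2 - (x j)^2 + s^2 := by
  subst hy
  have h1 : ∀ i, (Function.update x j s i)^2
      = Function.update (fun i => (x i)^2) j (s^2) i := by
    intro i
    by_cases h : i = j
    · subst h; simp
    · simp [Function.update_of_ne h]
  have h2 := Finset.sum_eq_sum_sdiff_singleton_add (Finset.mem_univ j) (fun i => (x i)^2)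
  rw [norm_sq_eq (WithLp.toLp 2 (Function.update x j s))]
  calc (∑ i : Fin 3, (Function.update x j s i)^2 : ℝ)
  _ = ∑ i : Fin 3, Function.update (fun i => (x i)^2) j (s^2) i :=
      Finset.sum_congr rfl (fun i _ => h1 i)
  _ = s^2 + ∑ i ∈ Finset.univ \ {j}, (x i)^2 :=
      Finset.sum_update_of_mem (Finset.mem_univ j) _ _
  _ = ‖x‖^2 - (x j)^2 + s^2 := by rw [norm_sq_eq x, h2]; ring

lemma iteratedDeriv2_quad (L a b t : ℝ) :
    iteratedDeriv 2 (fun s => hh L (a * s^2 + b)) t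
      = (hh2 L (a*t^2+b) * (2*a*t)) * (2*a*t) + hh1 L (a*t^2+b) * (2*a) := by
  have inner : ∀ s : ℝ, HasDerivAt (fun s : ℝ => a * s^2 + b) (2*a*s) s := by
    intro s
    have h := ((hasDerivAt_pow 2 s).const_mul a).add_const b
    norm_num at h
    exact (h.congr_deriv (by ring : a * (2 * s) = 2*a*s)).add_const b
  have d1 : ∀ s : ℝ, HasDerivAt (fun s => hh L (a * s^2 + b))
      (hh1 L (a * s^2 + b) * (2*a*s)) s := by
    intro s
    simpa [Function.comp_def] using (hasDerivAt_hh L (a*s^2+b)).comp s (inner s)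
  have e1 : deriv (fun s => hh L (a * s^2 + b))
      = fun s => hh1 L (a * s^2 + b) * (2*a*s) := funext fun s => (d1 s).deriv
  rw [show (2:ℕ) = 1+1 from rfl, iteratedDeriv_succ, iteratedDeriv_one, e1]
  have d2 : HasDerivAt (fun s => hh1 L (a * s^2 + b) * (2*a*s))
      ((hh2 L (a*t^2+b) * (2*a*t)) * (2*a*t) + hh1 L (a*t^2+b) * (2*a)) t := by
    have g1 : HasDerivAt (fun s => hh1 L (a * s^2 + b)) (hh2 L (a*t^2+b) * (2*a*t)) t := by
      simpa [Function.comp_def] using (hasDerivAt_hh1 L (a*t^2+b)).comp t (inner t)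
    have g2 : HasDerivAt (fun s : ℝ => 2*a*s) (2*a) t := by
      simpa using (hasDerivAt_id t).const_mul (2*a)
    have h3 := g1.mul g2
    exact h3
  exact d2.deriv

lemma iteratedDeriv_two_congr {u v : ℝ → ℝ} {t : ℝ} (h : u =ᶠ[nhds t] v) :
    iteratedDeriv 2 u t = iteratedDeriv 2 v t := by
  have h2 : deriv (deriv u) =ᶠ[nhds t] deriv (deriv v) := h.deriv.deriv
  have h3 := h2.eq_of_nhds
  rw [show (2:ℕ) = 1+1 from rfl, iteratedDeriv_succ, iteratedDeriv_one,
    iteratedDeriv_succ, iteratedDeriv_one]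
  exact h3

lemma iteratedDeriv_two_const_mul (a : ℝ) (v : ℝ → ℝ) (t : ℝ) :
    iteratedDeriv 2 (fun s => a * v s) t = a * iteratedDeriv 2 v t := by
  have hd : ∀ w : ℝ → ℝ, deriv (fun s => a * w s) = fun s => a * deriv w s :=
    fun w => funext fun s => deriv_const_mul_field a
  rw [show (2:ℕ) = 1+1 from rfl, iteratedDeriv_succ, iteratedDeriv_one,
    iteratedDeriv_succ, iteratedDeriv_one, hd, hd]

lemma dAlembert3_const_mul (c a : ℝ) (g : EuclideanSpace ℝ (Fin 3) × ℝ → ℝ)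
    (p : EuclideanSpace ℝ (Fin 3) × ℝ) :
    dAlembert3 c (fun q => a * g q) p = a * dAlembert3 c g p := by
  unfold dAlembert3
  simp only [iteratedDeriv_two_const_mul, Finset.mul_sum]
  ring_nf
  rw [Finset.mul_sum]
  ring_nf

lemma wave_eq (lam c : ℝ) (hc : c ≠ 0) (p : EuclideanSpace ℝ (Fin 3) × ℝ) :
    dAlembert3 c (fun q => hh (lam/(2*c)) (c^2*q.2^2 - ‖q.1‖^2)) p
      = lam^2 * hh (lam/(2*c)) (c^2*p.2^2 - ‖p.1‖^2) := by
  obtain ⟨x, t⟩ := p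
  set L : ℝ := lam/(2*c) with hL
  set u0 : ℝ := c^2*t^2 - ‖x‖^2 with hu0
  unfold dAlembert3
  simp only
  -- time part
  have htime : iteratedDeriv 2 (fun s => hh L (c^2*s^2 - ‖x‖^2)) t
      = (hh2 L u0 * (2*c^2*t)) * (2*c^2*t) + hh1 L u0 * (2*c^2) := by
    have e : (fun s => hh L (c^2*s^2 - ‖x‖^2)) = fun s => hh L (c^2*s^2 + (-‖x‖^2)) := by
      funext s; rw [sub_eq_add_neg]
    rw [e, iteratedDeriv2_quad]
    have : c^2*t^2 + (-‖x‖^2) = u0 := by rw [hu0]; ring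
    rw [this]
  -- space part
  have hspace : ∀ j : Fin 3,
      iteratedDeriv 2 (fun s => hh L (c^2*t^2 -
        @Norm.norm (EuclideanSpace ℝ (Fin 3)) _ (WithLp.toLp 2 (Function.update x j s)) ^2)) (x j)
      = (hh2 L u0 * (2*(-1)*(x j))) * (2*(-1)*(x j)) + hh1 L u0 * (2*(-1)) := by
    intro j
    have e : (fun s => hh L (c^2*t^2 -
          @Norm.norm (EuclideanSpace ℝ (Fin 3)) _ (WithLp.toLp 2 (Function.update x j s)) ^2))
        = fun s => hh L ((-1)*s^2 + (c^2*t^2 - ‖x‖^2 + (x j)^2)) := by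
      funext s
      congr 1
      rw [norm_update_sq x j s _ rfl]
      ring
    rw [e, iteratedDeriv2_quad]
    have : (-1)*(x j)^2 + (c^2*t^2 - ‖x‖^2 + (x j)^2) = u0 := by rw [hu0]; ring
    rw [this]
  rw [htime, Finset.sum_congr rfl (fun j _ => hspace j)]
  rw [Finset.sum_add_distrib, Finset.sum_const]
  have hsum : ∑ j : Fin 3, (hh2 L u0 * (2*(-1)*(x j))) * (2*(-1)*(x j))
      = 4 * hh2 L u0 * ‖x‖^2 := by
    rw [norm_sq_eq, Finset.mul_sum]
    apply Finset.sum_congr rfl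
    intro j _
    ring
  rw [hsum]
  simp only [Finset.card_univ, Fintype.card_fin, nsmul_eq_mul]
  have hode := ode_identity L u0
  have hL2 : 4*c^2*L^2 = lam^2 := by rw [hL]; field_simp; ring
  rw [hu0] at hode ⊢
  push_cast
  linear_combination 4*c^2*hode + hh L (c^2*t^2 - ‖x‖^2) * hL2

lemma dAlembert3_congr_cone (c : ℝ) (hc : 0 < c)
    (g₁ g₂ : EuclideanSpace ℝ (Fin 3) × ℝ → ℝ)
    (hg : ∀ q : EuclideanSpace ℝ (Fin 3) × ℝ, ‖q.1‖ < c * q.2 → g₁ q = g₂ q)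
    (x : EuclideanSpace ℝ (Fin 3)) (t : ℝ) (hp : ‖x‖ < c * t) :
    dAlembert3 c g₁ (x, t) = dAlembert3 c g₂ (x, t) := by
  have hct : 0 < c * t := lt_of_le_of_lt (norm_nonneg x) hp
  unfold dAlembert3
  simp only
  congr 1
  · apply iteratedDeriv_two_congr
    have hopen : IsOpen {s : ℝ | ‖x‖ < c * s} :=
      isOpen_lt continuous_const (continuous_const.mul continuous_id)
    filter_upwards [hopen.mem_nhds hp] with s hs
    exact hg (x, s) hs
  · congr 1
    apply Finset.sum_congr rfl
    intro j _
    apply iteratedDeriv_two_congr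
    have hopen : IsOpen {s : ℝ | ‖x‖^2 - (x j)^2 + s^2 < (c*t)^2} :=
      isOpen_lt (by fun_prop) continuous_const
    have hmem : x j ∈ {s : ℝ | ‖x‖^2 - (x j)^2 + s^2 < (c*t)^2} := by
      simp only [Set.mem_setOf_eq]
      nlinarith [hp, norm_nonneg x]
    filter_upwards [hopen.mem_nhds hmem] with s hs
    have key : ∀ y : EuclideanSpace ℝ (Fin 3), y = WithLp.toLp 2 (Function.update x j s) → ‖y‖ < c * t := by
      intro y hy
      have h2 : ‖y‖^2 < (c*t)^2 := by
        rw [norm_update_sq x j s y hy]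
        exact hs
      nlinarith [norm_nonneg y]
    exact hg (WithLp.toLp 2 (Function.update x j s), t) (key _ rfl)

lemma f_eq_F (lam c : ℝ) (hc : 0 < c) (y : EuclideanSpace ℝ (Fin 3)) (s : ℝ)
    (h : ‖y‖ < c * s) :
    besselI1 (lam / c * Real.sqrt (c^2*s^2 - ‖y‖^2)) / Real.sqrt (c^2*s^2 - ‖y‖^2)
      = hh (lam/(2*c)) (c^2*s^2 - ‖y‖^2) := by
  set u : ℝ := c^2*s^2 - ‖y‖^2 with hu
  have hu0 : 0 < u := by nlinarith [norm_nonneg y]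
  set r : ℝ := Real.sqrt u with hr
  have hr0 : 0 < r := Real.sqrt_pos.mpr hu0
  have hr2 : r^2 = u := Real.sq_sqrt hu0.le
  unfold besselI1 hh
  rw [← tsum_div_const]
  apply tsum_congr
  intro k
  have e1 : lam / c * r / 2 = lam/(2*c) * r := by
    field_simp
  rw [e1]
  have e2 : (lam/(2*c) * r)^(2*k+1) = (lam/(2*c))^(2*k+1) * (u^k * r) := by
    rw [mul_pow]
    congr 1
    rw [pow_succ, pow_mul, hr2]
  rw [e2]
  unfold aa
  have hfk : ((k.factorial:ℝ) * ((k+1).factorial:ℝ)) ≠ 0 := by positivity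
  field_simp

/-- the function
`f(x,t) = I₁((λ/c)√(c²t² - ‖x‖²)) / √(c²t² - ‖x‖²)` satisfies the fourth-order
Klein-Gordon-type equation `(∂²/∂t² - c²Δ)² f = λ⁴ f` on the open cone
`{(x,t) : ‖x‖ < ct, t > 0}`. -/
theorem statement4 (lam c : ℝ) (hlam : 0 < lam) (hc : 0 < c)
    (f : EuclideanSpace ℝ (Fin 3) × ℝ → ℝ)
    (hf : ∀ (x : EuclideanSpace ℝ (Fin 3)) (t : ℝ), f (x, t) =
      besselI1 (lam / c * Real.sqrt (c ^ 2 * t ^ 2 - ‖x‖ ^ 2)) /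
        Real.sqrt (c ^ 2 * t ^ 2 - ‖x‖ ^ 2)) :
    ∀ (x : EuclideanSpace ℝ (Fin 3)) (t : ℝ), 0 < t → ‖x‖ < c * t →
      (dAlembert3 c)^[2] f (x, t) = lam ^ 4 * f (x, t) := by
  intro x t ht hxt
  have hcne : c ≠ 0 := ne_of_gt hc
  have hfF : ∀ q : EuclideanSpace ℝ (Fin 3) × ℝ, ‖q.1‖ < c * q.2 →
      f q = hh (lam/(2*c)) (c^2*q.2^2 - ‖q.1‖^2) := by
    intro q hq
    obtain ⟨y, s⟩ := q
    rw [hf y s]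
    exact f_eq_F lam c hc y s hq
  have step1 : ∀ q : EuclideanSpace ℝ (Fin 3) × ℝ, ‖q.1‖ < c * q.2 →
      dAlembert3 c f q = lam^2 * hh (lam/(2*c)) (c^2*q.2^2 - ‖q.1‖^2) := by
    intro q hq
    obtain ⟨y, s⟩ := q
    rw [dAlembert3_congr_cone c hc f
      (fun q => hh (lam/(2*c)) (c^2*q.2^2 - ‖q.1‖^2)) hfF y s hq]
    exact wave_eq lam c hcne (y, s)
  have hfx : f (x, t) = hh (lam/(2*c)) (c^2*t^2 - ‖x‖^2) := hfF (x, t) hxt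
  calc (dAlembert3 c)^[2] f (x, t)
      = dAlembert3 c (dAlembert3 c f) (x, t) := rfl
  _ = dAlembert3 c (fun q => lam^2 * hh (lam/(2*c)) (c^2*q.2^2 - ‖q.1‖^2)) (x, t) :=
      dAlembert3_congr_cone c hc _ _ step1 x t hxt
  _ = lam^2 * dAlembert3 c (fun q => hh (lam/(2*c)) (c^2*q.2^2 - ‖q.1‖^2)) (x, t) :=
      dAlembert3_const_mul c (lam^2) _ (x, t)
  _ = lam^2 * (lam^2 * hh (lam/(2*c)) (c^2*t^2 - ‖x‖^2)) :=
      congrArg (fun z => lam^2 * z) (wave_eq lam c hcne (x, t))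
  _ = lam^4 * f (x, t) := by rw [hfx]; ring
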